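/- Let 0 ≤ ℓ ≤ k−1 and let f : R → ℤ/pℤ. Then f ∈ Ω_{p^ℓ−1} if and only if f factors through reduction modulo p^ℓ, i.e., there exists g : ℤ/p^ℓℤ → ℤ/pℤ such that f(x) = g(x mod p^ℓ) for all x ∈ R. -/

import Mathlib

lemma choose_mod_pow_eq (p : ℕ) [Fact p.Prime] (l n i : ℕ) (hi : i < p ^ l) :
    ((n.choose i : ZMod p)) = (((n % p ^ l).choose i : ZMod p)) := by
  have hp : 1 < p := (Fact.out : p.Prime).one_lt
  have hdig : ∀ j < l, (n % p ^ l) / p ^ j % p = n / p ^ j % p := by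
    intro j hj
    have hsplit : p ^ l = p ^ j * p ^ (l - j) := by rw [← pow_add]; congr 1; omega
    rw [hsplit, Nat.mod_mul_right_div_self,
      Nat.mod_mod_of_dvd _ (dvd_pow_self p (by omega : l - j ≠ 0))]
  have e1 := Choose.choose_modEq_choose_mul_prod_range_choose (p := p) (n := n) (k := i) l
  have e2 := Choose.choose_modEq_choose_mul_prod_range_choose (p := p) (n := n % p ^ l) (k := i) l
  have h1 := (ZMod.intCast_eq_intCast_iff _ _ _).mpr e1
  have h2 := (ZMod.intCast_eq_intCast_iff _ _ _).mpr e2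
  push_cast at h1 h2
  simp only [Nat.div_eq_of_lt hi, Nat.div_eq_of_lt (Nat.mod_lt n (by positivity : 0 < p ^ l)),
    Nat.choose_zero_right, Nat.cast_one, one_mul] at h1 h2
  rw [h1, h2]
  exact Finset.prod_congr rfl fun j hj => by rw [hdig j (Finset.mem_range.mp hj)]

lemma delta_mem_span (p N : ℕ) [Fact p.Prime] [NeZero N] :
    ∀ m v : ℕ, v < N → N - v ≤ m →
    (fun y : ZMod N => if y.val = v then (1 : ZMod p) else 0) ∈
      Submodule.span (ZMod p)
        {g : ZMod N → ZMod p | ∃ i < N, g = fun y : ZMod N => ((y.val.choose i : ZMod p))} := by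
  intro m
  induction m with
  | zero => intro v hv hm; omega
  | succ m ih =>
    intro v hv hm
    have key : (fun y : ZMod N => if y.val = v then (1 : ZMod p) else 0)
        = (fun y : ZMod N => ((y.val.choose v : ZMod p)))
          - ∑ w ∈ Finset.Ico (v + 1) N, (w.choose v : ZMod p) •
              fun y : ZMod N => if y.val = w then (1 : ZMod p) else 0 := by
      funext y
      have hyval : y.val < N := ZMod.val_lt y
      simp only [Pi.sub_apply, Finset.sum_apply, Pi.smul_apply, smul_eq_mul, mul_ite, mul_one,
        mul_zero]
      rw [Finset.sum_ite_eq (Finset.Ico (v + 1) N) y.val (fun w => (w.choose v : ZMod p))]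
      rcases lt_trichotomy y.val v with h | h | h
      · rw [if_neg (by omega), if_neg (by simp [Finset.mem_Ico]; omega),
          Nat.choose_eq_zero_of_lt h]
        simp
      · rw [if_pos h, if_neg (by simp [Finset.mem_Ico]; omega), h, Nat.choose_self]
        simp
      · rw [if_neg (by omega), if_pos (by simp [Finset.mem_Ico]; omega)]
        simp
    rw [key]
    refine sub_mem (Submodule.subset_span ⟨v, hv, rfl⟩) (Submodule.sum_mem _ fun w hw => ?_)
    simp only [Finset.mem_Ico] at hw
    exact Submodule.smul_mem _ _ (ih w hw.2 (by omega))

lemma all_mem_span (p N : ℕ) [Fact p.Prime] [NeZero N] (h : ZMod N → ZMod p) :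
    h ∈ Submodule.span (ZMod p)
      {g : ZMod N → ZMod p | ∃ i < N, g = fun y : ZMod N => ((y.val.choose i : ZMod p))} := by
  have key : h = ∑ v ∈ Finset.range N, h (v : ZMod N) •
      fun y : ZMod N => if y.val = v then (1 : ZMod p) else 0 := by
    funext y
    have hyval : y.val < N := ZMod.val_lt y
    simp only [Finset.sum_apply, Pi.smul_apply, smul_eq_mul, mul_ite, mul_one, mul_zero]
    rw [Finset.sum_ite_eq (Finset.range N) y.val (fun v => h (v : ZMod N)),
      if_pos (Finset.mem_range.mpr hyval), ZMod.natCast_val, ZMod.cast_id]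
  rw [key]
  exact Submodule.sum_mem _ fun v hv =>
    Submodule.smul_mem _ _ (delta_mem_span p N N v (Finset.mem_range.mp hv) (by omega))

/-- The binomial phi function `φ_m : ℤ/p^kℤ → ℤ/pℤ`, `φ_m(x) = C(x̄, m) mod p`. -/
def phi (p k m : ℕ) (x : ZMod (p ^ k)) : ZMod p := (x.val.choose m : ZMod p)

/-- For `0 ≤ ℓ ≤ k−1` and `f : R → ℤ/pℤ`: `f ∈ Ω_{p^ℓ−1}` iff `f`
factors through reduction modulo `p^ℓ`. -/
theorem stmt_11 (p k l : ℕ) [Fact p.Prime] (hk : 1 ≤ k) (hl : l ≤ k - 1)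
    (f : ZMod (p ^ k) → ZMod p) :
    f ∈ Submodule.span (ZMod p) {g : ZMod (p ^ k) → ZMod p | ∃ i < p ^ l, g = phi p k i} ↔
    ∃ g : ZMod (p ^ l) → ZMod p, ∀ x : ZMod (p ^ k),
      f x = g (ZMod.castHom (pow_dvd_pow p (le_trans hl (Nat.sub_le k 1)))
        (ZMod (p ^ l)) x) := by
  have hp : 1 < p := (Fact.out : p.Prime).one_lt
  haveI : NeZero (p ^ l) := ⟨pow_ne_zero _ (by omega)⟩
  haveI : NeZero (p ^ k) := ⟨pow_ne_zero _ (by omega)⟩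
  set π : ZMod (p ^ k) → ZMod (p ^ l) := fun x =>
    ZMod.castHom (pow_dvd_pow p (le_trans hl (Nat.sub_le k 1))) (ZMod (p ^ l)) x with hπ
  have hπval : ∀ x : ZMod (p ^ k), (π x).val = x.val % p ^ l := by
    intro x
    rw [hπ]
    simp only [ZMod.castHom_apply]
    rw [← ZMod.natCast_val, ZMod.val_natCast]
  have hphi : ∀ i < p ^ l, phi p k i =
      (fun y : ZMod (p ^ l) => ((y.val.choose i : ZMod p))) ∘ π := by
    intro i hi
    funext x
    simp only [Function.comp_apply, phi, hπval]
    exact choose_mod_pow_eq p l x.val i hi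
  set L : (ZMod (p ^ l) → ZMod p) →ₗ[ZMod p] (ZMod (p ^ k) → ZMod p) :=
    LinearMap.funLeft (ZMod p) (ZMod p) π with hL
  constructor
  · intro hf
    have hrange : f ∈ LinearMap.range L := by
      refine Submodule.span_le.mpr ?_ hf
      rintro g ⟨i, hi, rfl⟩
      exact ⟨fun y => ((y.val.choose i : ZMod p)), (hphi i hi).symm⟩
    obtain ⟨g, hg⟩ := hrange
    exact ⟨g, fun x => by rw [← hg]; rfl⟩
  · rintro ⟨g, hg⟩
    have hfL : f = L g := funext fun x => hg x
    rw [hfL]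
    have hmem : L g ∈ (Submodule.span (ZMod p)
        {g : ZMod (p ^ l) → ZMod p | ∃ i < p ^ l,
          g = fun y : ZMod (p ^ l) => ((y.val.choose i : ZMod p))}).map L :=
      Submodule.mem_map_of_mem (all_mem_span p (p ^ l) g)
    rw [Submodule.map_span] at hmem
    refine Submodule.span_le.mpr ?_ hmem
    rintro _ ⟨ψ, ⟨i, hi, rfl⟩, rfl⟩
    exact Submodule.subset_span ⟨i, hi, (hphi i hi).symm⟩
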